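/- arXiv:2507.09937 — 4 statements merged into one kernel-verified Lean document; each statement's English description precedes it below -/
import Mathlib

section
/- Let e^mem ∈ ℝ^{d_emb} be a unit vector, let z^mem ∈ ℝ^{d_h}, let γ > 0, ε > 0, c_min > 0, and m ≥ 1. Let z^{(1)}, …, z^{(m)} ∈ ℝ^{d_h} and e^{(1)}, …, e^{(m)} ∈ ℝ^{d_emb} satisfy ⟨e^mem, e^{(j)}⟩ = 0 and ⟨z^{(j)}, z^mem⟩ ≥ ε for all j. Let W^{(0)}, …, W^{(m)} ∈ ℝ^{d_emb × d_h} satisfy the update W^{(j)} = W^{(j−1)} + γ (e^{(j)} − σ(W^{(j−1)} z^{(j)})) (z^{(j)})^⊤, and assume that ⟨e^mem, σ(W^{(j−1)} z^{(j)})⟩ ≥ c_min for all j = 1, …, m. Then ⟨e^mem, W^{(m)} z^mem⟩ ≤ ⟨e^mem, W^{(0)} z^mem⟩ − γ m ε c_min. -/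
open Matrix

/-- The softmax function: `σ(x)_i = exp(x_i) / Σ_j exp(x_j)`. -/
noncomputable def softmax {d : ℕ} (x : Fin d → ℝ) : Fin d → ℝ :=
  fun i => Real.exp (x i) / ∑ j, Real.exp (x j)

/-- The Euclidean (ℓ²) norm of a vector in `Fin n → ℝ`. -/
noncomputable def l2norm {n : ℕ} (x : Fin n → ℝ) : ℝ :=
  Real.sqrt (∑ i, (x i) ^ 2)

/-- The standard inner product on `Fin n → ℝ`. -/
def dotp {n : ℕ} (x y : Fin n → ℝ) : ℝ := ∑ i, x i * y i

/-- Forgetting in standard training: under the SGD cross-entropy updates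
`W^{(j)} = W^{(j-1)} + γ (e^{(j)} - σ(W^{(j-1)} z^{(j)})) (z^{(j)})ᵀ` on `m` other
sequences with targets orthogonal to `e_mem`, activations similar to `z_mem`
(`⟨z^{(j)}, z_mem⟩ ≥ ε`), and softmax mass `⟨e_mem, σ(W^{(j-1)} z^{(j)})⟩ ≥ c_min`,
the memorized logit drops:
`⟨e_mem, W^{(m)} z_mem⟩ ≤ ⟨e_mem, W^{(0)} z_mem⟩ - γ m ε c_min`. -/
theorem forgetting_in_standard_training {demb dh : ℕ}
    (emem : Fin demb → ℝ) (hemem : l2norm emem = 1)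
    (zmem : Fin dh → ℝ)
    (γ ε cmin : ℝ) (hγ : 0 < γ) (hε : 0 < ε) (hcmin : 0 < cmin)
    (m : ℕ) (hm : 1 ≤ m)
    (z : ℕ → Fin dh → ℝ) (e : ℕ → Fin demb → ℝ)
    (horth : ∀ j ∈ Finset.Icc 1 m, dotp emem (e j) = 0)
    (hsim : ∀ j ∈ Finset.Icc 1 m, ε ≤ dotp (z j) zmem)
    (W : ℕ → Matrix (Fin demb) (Fin dh) ℝ)
    (hupd : ∀ j ∈ Finset.Icc 1 m,
      W j = W (j - 1)
        + γ • vecMulVec (e j - softmax ((W (j - 1)).mulVec (z j))) (z j))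
    (hpred : ∀ j ∈ Finset.Icc 1 m,
      cmin ≤ dotp emem (softmax ((W (j - 1)).mulVec (z j)))) :
    dotp emem ((W m).mulVec zmem)
      ≤ dotp emem ((W 0).mulVec zmem) - γ * m * ε * cmin := by
  have key : ∀ n, n ≤ m → dotp emem ((W n).mulVec zmem)
      ≤ dotp emem ((W 0).mulVec zmem) - γ * n * ε * cmin := by
    intro n
    induction n with
    | zero => intro _; simp
    | succ k ih =>
      intro hk
      have hkm : k ≤ m := Nat.le_of_succ_le hk
      have hmem : k + 1 ∈ Finset.Icc 1 m := Finset.mem_Icc.mpr ⟨Nat.succ_le_succ (Nat.zero_le k), hk⟩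
      have hupd' := hupd (k + 1) hmem
      simp only [Nat.add_sub_cancel] at hupd'
      set s := softmax ((W k).mulVec (z (k + 1))) with hs
      have hstep : dotp emem ((W (k + 1)).mulVec zmem)
          = dotp emem ((W k).mulVec zmem)
            + γ * (dotp emem (e (k + 1) - s)) * (dotp (z (k + 1)) zmem) := by
        rw [hupd']
        simp only [dotp, Matrix.mulVec, dotProduct, Matrix.add_apply,
          Matrix.smul_apply, vecMulVec_apply, smul_eq_mul, add_mul, mul_add,
          Finset.sum_add_distrib, Finset.mul_sum]
        congr 1
        rw [Finset.sum_comm]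
        refine Finset.sum_congr rfl fun y _ => ?_
        rw [Finset.sum_mul]
        exact Finset.sum_congr rfl fun x _ => by ring
      have horth' := horth (k + 1) hmem
      have hpred' := hpred (k + 1) hmem
      simp only [Nat.add_sub_cancel, ← hs] at hpred'
      have hsim' := hsim (k + 1) hmem
      have hdot : dotp emem (e (k + 1) - s) = - dotp emem s := by
        simp only [dotp, Pi.sub_apply, mul_sub, Finset.sum_sub_distrib]
        rw [show (∑ i, emem i * e (k+1) i) = dotp emem (e (k+1)) from rfl, horth']
        ring
      have hprod : γ * cmin * ε ≤ γ * (dotp emem s) * (dotp (z (k + 1)) zmem) := by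
        apply mul_le_mul
        · exact mul_le_mul_of_nonneg_left hpred' hγ.le
        · exact hsim'
        · exact hε.le
        · exact mul_nonneg hγ.le (hcmin.le.trans hpred')
      have := ih hkm
      rw [hstep, hdot]
      push_cast
      nlinarith [this, hprod]
  have := key m le_rfl
  linarith
end

section
/- Let k ≥ 1 and let v_1, …, v_{k+1} ∈ ℝ^n be orthonormal and ũ_1, …, ũ_{k+1} ∈ ℝ^m be unit vectors. Let σ_1, …, σ_k > 0 satisfy σ_i < 1/(2k) for all i, and set F² := Σ_{i=1}^k σ_i². Let Δ > 1 be a real number and suppose 0 ≤ σ_i^Δ ≤ σ_i + Δ/(k+1) for i = 1, …, k and 0 ≤ σ_{k+1}^Δ ≤ Δ/(k+1). Then the matrix W_ent = Σ_{i=1}^{k} σ_i^Δ ũ_i v_i^⊤ + σ_{k+1}^Δ ũ_{k+1} v_{k+1}^⊤ satisfies ‖W_ent‖_F² ≤ F² + 2Δ²/k. -/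
open Matrix

/-- The squared Frobenius norm of a matrix: the sum of the squares of its entries. -/
def frobSq {m n : ℕ} (A : Matrix (Fin m) (Fin n) ℝ) : ℝ :=
  ∑ i, ∑ j, (A i j) ^ 2

lemma sum_sq_expand {N K : ℕ} (c : Fin K → ℝ) (v : Fin K → Fin N → ℝ)
    (hv : ∀ i j, (∑ t, v i t * v j t) = if i = j then 1 else 0) :
    ∑ j, (∑ l, c l * v l j) ^ 2 = ∑ l, (c l) ^ 2 := by
  simp_rw [sq, Finset.sum_mul_sum]
  rw [Finset.sum_comm]
  have : ∀ l, ∑ j, ∑ l', (c l * v l j) * (c l' * v l' j)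
      = ∑ l', c l * c l' * (∑ t, v l t * v l' t) := by
    intro l
    rw [Finset.sum_comm]
    refine Finset.sum_congr rfl fun l' _ => ?_
    rw [Finset.mul_sum]
    refine Finset.sum_congr rfl fun t _ => by ring
  simp_rw [this, hv, mul_ite, mul_one, mul_zero, Finset.sum_ite_eq, Finset.mem_univ, if_true]

/-- The entangled memorizing solution `W_ent = Σ_{i=1}^{k+1} σᵢᴰ ũᵢ vᵢᵀ`, with
`v₁, …, v_{k+1}` orthonormal, `ũᵢ` unit vectors, singular values `σᵢ < 1/(2k)`,
and perturbed singular values `σᵢᴰ ≤ σᵢ + Δ/(k+1)` (for `i ≤ k`) and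
`σ_{k+1}ᴰ ≤ Δ/(k+1)` with `Δ > 1`, satisfies `‖W_ent‖_F² ≤ Σᵢ σᵢ² + 2Δ²/k`. -/
theorem frobSq_entangled_le (k : ℕ) (hk : 1 ≤ k) {m n : ℕ}
    (v : Fin (k + 1) → Fin n → ℝ)
    (hv : ∀ i j, dotp (v i) (v j) = if i = j then 1 else 0)
    (u : Fin (k + 1) → Fin m → ℝ) (hu : ∀ i, l2norm (u i) = 1)
    (σ : Fin k → ℝ) (hσpos : ∀ i, 0 < σ i) (hσlt : ∀ i, σ i < 1 / (2 * k))
    (Δ : ℝ) (hΔ : 1 < Δ)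
    (σΔ : Fin (k + 1) → ℝ)
    (hσΔ1 : ∀ i : Fin k,
      0 ≤ σΔ i.castSucc ∧ σΔ i.castSucc ≤ σ i + Δ / (k + 1))
    (hσΔ2 : 0 ≤ σΔ (Fin.last k) ∧ σΔ (Fin.last k) ≤ Δ / (k + 1)) :
    frobSq (∑ i, σΔ i • vecMulVec (u i) (v i))
      ≤ (∑ i, (σ i) ^ 2) + 2 * Δ ^ 2 / k := by
  -- unit norms squared
  have hu2 : ∀ l, ∑ i, (u l i) ^ 2 = 1 := by
    intro l
    have h := hu l
    unfold l2norm at h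
    have hnn : 0 ≤ ∑ i, (u l i) ^ 2 :=
      Finset.sum_nonneg fun i _ => sq_nonneg _
    nlinarith [Real.sq_sqrt hnn, h]
  -- Step 1: frobSq = ∑ l (σΔ l)^2
  have key : frobSq (∑ i, σΔ i • vecMulVec (u i) (v i)) = ∑ l, (σΔ l) ^ 2 := by
    have hentry : ∀ i j, (∑ l, σΔ l • vecMulVec (u l) (v l)) i j
        = ∑ l, (σΔ l * u l i) * v l j := by
      intro i j
      simp [Matrix.sum_apply, vecMulVec_apply, mul_assoc]
    have hvd : ∀ a b : Fin (k+1), (∑ t, v a t * v b t) = if a = b then 1 else 0 := by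
      intro a b; exact hv a b
    unfold frobSq
    simp_rw [hentry]
    have hrow : ∀ i : Fin m,
        ∑ j, (∑ l, (σΔ l * u l i) * v l j) ^ 2 = ∑ l, (σΔ l * u l i) ^ 2 :=
      fun i => sum_sq_expand (fun l => σΔ l * u l i) v hvd
    simp_rw [hrow]
    rw [Finset.sum_comm]
    refine Finset.sum_congr rfl fun l _ => ?_
    simp_rw [mul_pow]
    rw [← Finset.mul_sum, hu2 l, mul_one]
  rw [key]
  -- Step 2: numeric bound
  rw [Fin.sum_univ_castSucc]
  have hkR : (1 : ℝ) ≤ (k : ℝ) := by exact_mod_cast hk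
  have hkpos : (0 : ℝ) < k := by linarith
  have hδ : 0 < Δ / (k + 1) := by positivity
  -- bound the first k terms
  have hterm : ∀ i : Fin k, (σΔ i.castSucc) ^ 2
      ≤ (σ i) ^ 2 + 2 * σ i * (Δ / (k + 1)) + (Δ / (k + 1)) ^ 2 := by
    intro i
    obtain ⟨h0, h1⟩ := hσΔ1 i
    nlinarith [sq_nonneg (σΔ i.castSucc), hσpos i]
  have hsum1 : ∑ i : Fin k, (σΔ i.castSucc) ^ 2
      ≤ ∑ i : Fin k, ((σ i) ^ 2 + 2 * σ i * (Δ / (k + 1)) + (Δ / (k + 1)) ^ 2) :=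
    Finset.sum_le_sum fun i _ => hterm i
  have hsumσ : ∑ i : Fin k, σ i ≤ (1 : ℝ) / 2 := by
    calc ∑ i : Fin k, σ i ≤ ∑ _i : Fin k, (1 / (2 * (k : ℝ))) :=
          Finset.sum_le_sum fun i _ => le_of_lt (hσlt i)
      _ = k * (1 / (2 * (k : ℝ))) := by
          rw [Finset.sum_const, Finset.card_univ, Fintype.card_fin, nsmul_eq_mul]
      _ = 1 / 2 := by field_simp
  have hlast : (σΔ (Fin.last k)) ^ 2 ≤ (Δ / (k + 1)) ^ 2 := by
    obtain ⟨h0, h1⟩ := hσΔ2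
    nlinarith
  have hexpand : ∑ i : Fin k, ((σ i) ^ 2 + 2 * σ i * (Δ / (k + 1)) + (Δ / (k + 1)) ^ 2)
      = (∑ i, (σ i) ^ 2) + 2 * (Δ / (k + 1)) * (∑ i : Fin k, σ i)
        + k * (Δ / (k + 1)) ^ 2 := by
    rw [Finset.sum_add_distrib, Finset.sum_add_distrib, Finset.sum_const,
      Finset.card_univ, Fintype.card_fin, nsmul_eq_mul, Finset.mul_sum]
    congr 1
    congr 1
    exact Finset.sum_congr rfl fun i _ => by ring
  have hmain : (∑ i : Fin k, (σΔ i.castSucc) ^ 2) + (σΔ (Fin.last k)) ^ 2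
      ≤ (∑ i, (σ i) ^ 2) + 2 * (Δ / (k + 1)) * (1 / 2)
        + (k + 1) * (Δ / (k + 1)) ^ 2 := by
    have := hsum1
    rw [hexpand] at this
    have h2 : 2 * (Δ / (k + 1)) * (∑ i : Fin k, σ i) ≤ 2 * (Δ / (k + 1)) * (1 / 2) := by
      apply mul_le_mul_of_nonneg_left hsumσ (by positivity)
    nlinarith
  -- final: Δ/(k+1) + (k+1)*(Δ/(k+1))^2 = Δ/(k+1) + Δ²/(k+1) ≤ 2Δ²/(k+1) ≤ 2Δ²/k
  have hk1pos : (0 : ℝ) < (k : ℝ) + 1 := by linarith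
  have hfin : 2 * (Δ / (k + 1)) * (1 / 2) + (k + 1) * (Δ / (k + 1)) ^ 2
      ≤ 2 * Δ ^ 2 / k := by
    have he : 2 * (Δ / ((k:ℝ) + 1)) * (1 / 2) + ((k:ℝ) + 1) * (Δ / (k + 1)) ^ 2
        = (Δ + Δ ^ 2) / ((k:ℝ) + 1) := by field_simp
    rw [he]
    rw [div_le_div_iff₀ hk1pos hkpos]
    have hΔsq : Δ ≤ Δ ^ 2 := by nlinarith
    have h1 : Δ * k ≤ Δ ^ 2 * k := mul_le_mul_of_nonneg_right hΔsq (le_of_lt hkpos)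
    have h2 : (0:ℝ) ≤ Δ ^ 2 := sq_nonneg Δ
    nlinarith
  linarith
end

section
/- Let k ≥ 3, let W* ∈ ℝ^{m×n} be a rank-k matrix with singular value decomposition W* = Σ_{i=1}^k σ_i u_i v_i^⊤ where every σ_i < 1/(2k). Let Δ_mem ∈ ℝ^m with ‖Δ_mem‖_2 > 1 and let v ∈ ℝ^n be a unit vector with W* v = 0; set W_dis = W* + Δ_mem v^⊤. Let v_{k+1} ∈ ℝ^n be a unit vector orthogonal to v_1, …, v_k, let ũ_1, …, ũ_{k+1} ∈ ℝ^m be unit vectors, and let W_ent = Σ_{i=1}^{k} σ_i^Δ ũ_i v_i^⊤ + σ_{k+1}^Δ ũ_{k+1} v_{k+1}^⊤ with 0 ≤ σ_i^Δ ≤ σ_i + ‖Δ_mem‖_2/(k+1) for i ≤ k and 0 ≤ σ_{k+1}^Δ ≤ ‖Δ_mem‖_2/(k+1). Then ‖W_ent‖_F < ‖W_dis‖_F. -/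
open Matrix

/-- The Frobenius norm of a matrix. -/
noncomputable def frobNorm {m n : ℕ} (A : Matrix (Fin m) (Fin n) ℝ) : ℝ :=
  Real.sqrt (frobSq A)

lemma dotp_self {n : ℕ} (x : Fin n → ℝ) : dotp x x = ∑ i, (x i)^2 := by
  simp [dotp, sq]

lemma frobSq_nonneg {m n : ℕ} (A : Matrix (Fin m) (Fin n) ℝ) : 0 ≤ frobSq A :=
  Finset.sum_nonneg fun _ _ => Finset.sum_nonneg fun _ _ => sq_nonneg _

lemma sumsq_of_l2norm_one {n : ℕ} {x : Fin n → ℝ} (h : l2norm x = 1) :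
    ∑ i, (x i)^2 = 1 := Real.sqrt_eq_one.mp h

lemma frobSq_sum_rankOne {m n : ℕ} {ι : Type*} [Fintype ι] [DecidableEq ι]
    (c : ι → ℝ) (a : ι → Fin m → ℝ) (b : ι → Fin n → ℝ)
    (hb : ∀ i j, dotp (b i) (b j) = if i = j then 1 else 0) :
    frobSq (∑ l, c l • vecMulVec (a l) (b l)) = ∑ l, (c l)^2 * dotp (a l) (a l) := by
  have entry : ∀ i j, (∑ l, c l • vecMulVec (a l) (b l)) i j
      = ∑ l, c l * a l i * b l j := by
    intro i j
    simp [Matrix.sum_apply, vecMulVec_apply, mul_assoc]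
  have key : ∀ l l', (∑ i, ∑ j, (c l * a l i * b l j) * (c l' * a l' i * b l' j))
      = (c l * c l') * dotp (a l) (a l') * dotp (b l) (b l') := by
    intro l l'
    calc ∑ i, ∑ j, (c l * a l i * b l j) * (c l' * a l' i * b l' j)
        = ∑ i, (c l * a l i * (c l' * a l' i)) * ∑ j, b l j * b l' j := by
          refine Finset.sum_congr rfl fun i _ => ?_
          rw [Finset.mul_sum]
          exact Finset.sum_congr rfl fun j _ => by ring
      _ = (∑ i, c l * a l i * (c l' * a l' i)) * ∑ j, b l j * b l' j :=
          (Finset.sum_mul _ _ _).symm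
      _ = ((c l * c l') * ∑ i, a l i * a l' i) * ∑ j, b l j * b l' j := by
          congr 1
          rw [Finset.mul_sum]
          exact Finset.sum_congr rfl fun i _ => by ring
      _ = (c l * c l') * dotp (a l) (a l') * dotp (b l) (b l') := by
          rw [dotp, dotp]
  calc frobSq (∑ l, c l • vecMulVec (a l) (b l))
      = ∑ i, ∑ j, ∑ l, ∑ l', (c l * a l i * b l j) * (c l' * a l' i * b l' j) := by
        refine Finset.sum_congr rfl fun i _ => Finset.sum_congr rfl fun j _ => ?_
        rw [entry, sq, Finset.sum_mul_sum]
    _ = ∑ i, ∑ l, ∑ j, ∑ l', (c l * a l i * b l j) * (c l' * a l' i * b l' j) :=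
        Finset.sum_congr rfl fun i _ => Finset.sum_comm
    _ = ∑ l, ∑ i, ∑ j, ∑ l', (c l * a l i * b l j) * (c l' * a l' i * b l' j) :=
        Finset.sum_comm
    _ = ∑ l, ∑ i, ∑ l', ∑ j, (c l * a l i * b l j) * (c l' * a l' i * b l' j) :=
        Finset.sum_congr rfl fun l _ => Finset.sum_congr rfl fun i _ => Finset.sum_comm
    _ = ∑ l, ∑ l', ∑ i, ∑ j, (c l * a l i * b l j) * (c l' * a l' i * b l' j) :=
        Finset.sum_congr rfl fun l _ => Finset.sum_comm
    _ = ∑ l, ∑ l', (c l * c l') * dotp (a l) (a l') * dotp (b l) (b l') :=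
        Finset.sum_congr rfl fun l _ => Finset.sum_congr rfl fun l' _ => key l l'
    _ = ∑ l, (c l)^2 * dotp (a l) (a l) := by
        refine Finset.sum_congr rfl fun l _ => ?_
        rw [Finset.sum_eq_single l]
        · rw [hb l l]; simp [sq]
        · intro l' _ hne
          rw [hb l l']
          simp [(Ne.symm hne : ¬ l = l')]
        · simp

lemma num_ineq (K d c S : ℝ) (hK : 3 ≤ K) (hd : 1 < d)
    (hc : c = d / (K + 1)) (hS0 : 0 ≤ S) (hS : S < 1/2) :
    2 * c * S + K * c ^ 2 + c ^ 2 < d ^ 2 := by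
  have hK1 : (0:ℝ) < K + 1 := by linarith
  have hd0 : (0:ℝ) < d := by linarith
  have hcd : c * (K + 1) = d := by rw [hc]; field_simp
  have hc0 : 0 < c := by rw [hc]; positivity
  have h1 : 2 * c * S < c := by nlinarith
  have hdk : 1 < d * K := by nlinarith
  have h2 : (K + 1) * c ^ 2 + c < d ^ 2 := by
    nlinarith [mul_lt_mul_of_pos_left hdk hc0, mul_pos hc0 hd0]
  nlinarith

/-- The entangled memorizing solution has strictly smaller Frobenius norm than the
disentangled one. `W* = Σ_{i=1}^k σᵢ uᵢ vᵢᵀ` is a rank-`k` SVD with `σᵢ < 1/(2k)` and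
`k ≥ 3`; `W_dis = W* + Δ_mem vᵀ` stores the memorization `Δ_mem` (with `‖Δ_mem‖₂ > 1`)
along a unit direction `v` with `W* v = 0`; the entangled solution
`W_ent = Σ_{i=1}^k σᵢᴰ ũᵢ vᵢᵀ + σ_{k+1}ᴰ ũ_{k+1} v_{k+1}ᵀ` redistributes the
memorization across the generalizing directions, with `σᵢᴰ ≤ σᵢ + ‖Δ_mem‖₂/(k+1)` and
`σ_{k+1}ᴰ ≤ ‖Δ_mem‖₂/(k+1)`. Then `‖W_ent‖_F < ‖W_dis‖_F`. -/
theorem frobNorm_entangled_lt_disentangled (k : ℕ) (hk : 3 ≤ k) {m n : ℕ}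
    (σ : Fin k → ℝ) (hσpos : ∀ i, 0 < σ i) (hσlt : ∀ i, σ i < 1 / (2 * k))
    (u : Fin k → Fin m → ℝ) (hu : ∀ i j, dotp (u i) (u j) = if i = j then 1 else 0)
    (v : Fin k → Fin n → ℝ) (hv : ∀ i j, dotp (v i) (v j) = if i = j then 1 else 0)
    (Wstar : Matrix (Fin m) (Fin n) ℝ)
    (hWstar : Wstar = ∑ i, σ i • vecMulVec (u i) (v i))
    (hrank : Wstar.rank = k)
    (Δmem : Fin m → ℝ) (hΔ : 1 < l2norm Δmem)
    (v0 : Fin n → ℝ) (hv0 : l2norm v0 = 1) (hWv0 : Wstar.mulVec v0 = 0)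
    (vlast : Fin n → ℝ) (hvlast : l2norm vlast = 1)
    (hvorth : ∀ i, dotp vlast (v i) = 0)
    (ut : Fin (k + 1) → Fin m → ℝ) (hut : ∀ i, l2norm (ut i) = 1)
    (σΔ : Fin (k + 1) → ℝ)
    (hσΔ1 : ∀ i : Fin k,
      0 ≤ σΔ i.castSucc ∧ σΔ i.castSucc ≤ σ i + l2norm Δmem / (k + 1))
    (hσΔ2 : 0 ≤ σΔ (Fin.last k) ∧ σΔ (Fin.last k) ≤ l2norm Δmem / (k + 1)) :
    frobNorm ((∑ i : Fin k, σΔ i.castSucc • vecMulVec (ut i.castSucc) (v i))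
        + σΔ (Fin.last k) • vecMulVec (ut (Fin.last k)) vlast)
      < frobNorm (Wstar + vecMulVec Δmem v0) := by
  set d : ℝ := l2norm Δmem with hd
  have hd1 : 1 < d := hΔ
  have hd0 : 0 < d := lt_trans one_pos hd1
  have hdsq : d ^ 2 = ∑ i, (Δmem i) ^ 2 := by
    rw [hd]
    exact Real.sq_sqrt (Finset.sum_nonneg fun i _ => sq_nonneg _)
  -- dotp symmetry
  have dotp_comm : ∀ {N : ℕ} (x y : Fin N → ℝ), dotp x y = dotp y x := by
    intro N x y; simp [dotp, mul_comm]
  -- the combined right-vector family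
  set b : Fin (k + 1) → Fin n → ℝ := fun l => Fin.lastCases vlast v l with hb
  have hbcast : ∀ i : Fin k, b i.castSucc = v i := fun i => Fin.lastCases_castSucc ..
  have hblast : b (Fin.last k) = vlast := Fin.lastCases_last ..
  have hbortho : ∀ i j, dotp (b i) (b j) = if i = j then 1 else 0 := by
    intro i j
    refine Fin.lastCases ?_ ?_ i
    · refine Fin.lastCases ?_ ?_ j
      · rw [hblast, dotp_self, sumsq_of_l2norm_one hvlast]; simp
      · intro j'
        rw [hblast, hbcast, hvorth j']
        simp [(Fin.castSucc_lt_last j').ne']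
    · intro i'
      refine Fin.lastCases ?_ ?_ j
      · rw [hblast, hbcast, dotp_comm, hvorth i']
        simp [(Fin.castSucc_lt_last i').ne]
      · intro j'
        rw [hbcast, hbcast, hv i' j']
        simp [Fin.castSucc_inj]
  -- rewrite W_ent as a single sum
  have hWent : ((∑ i : Fin k, σΔ i.castSucc • vecMulVec (ut i.castSucc) (v i))
        + σΔ (Fin.last k) • vecMulVec (ut (Fin.last k)) vlast)
      = ∑ l : Fin (k+1), σΔ l • vecMulVec (ut l) (b l) := by
    rw [Fin.sum_univ_castSucc, hblast]
    congr 1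
    exact Finset.sum_congr rfl fun i _ => by rw [hbcast]
  have hEnt : frobSq ((∑ i : Fin k, σΔ i.castSucc • vecMulVec (ut i.castSucc) (v i))
        + σΔ (Fin.last k) • vecMulVec (ut (Fin.last k)) vlast)
      = ∑ l : Fin (k+1), (σΔ l) ^ 2 := by
    rw [hWent, frobSq_sum_rankOne _ _ _ hbortho]
    refine Finset.sum_congr rfl fun l _ => ?_
    rw [dotp_self, sumsq_of_l2norm_one (hut l), mul_one]
  -- frobSq of Wstar
  have hWs : frobSq Wstar = ∑ i, (σ i) ^ 2 := by
    rw [hWstar, frobSq_sum_rankOne _ _ _ hv]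
    refine Finset.sum_congr rfl fun i _ => ?_
    rw [hu i i, if_pos rfl, mul_one]
  -- frobSq of W_dis
  have hrow : ∀ i, ∑ j, Wstar i j * v0 j = 0 := by
    intro i
    have := congrFun hWv0 i
    simpa [Matrix.mulVec, dotProduct] using this
  have hDis : frobSq (Wstar + vecMulVec Δmem v0) = frobSq Wstar + d ^ 2 := by
    have rowexp : ∀ i, ∑ j, (Wstar i j + Δmem i * v0 j)^2
        = (∑ j, (Wstar i j)^2) + (Δmem i)^2 * (∑ j, (v0 j)^2)
          + 2 * Δmem i * (∑ j, Wstar i j * v0 j) := by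
      intro i
      rw [Finset.mul_sum, Finset.mul_sum, ← Finset.sum_add_distrib,
        ← Finset.sum_add_distrib]
      exact Finset.sum_congr rfl fun j _ => by ring
    have rowexp2 : ∀ i, ∑ j, (Wstar i j + Δmem i * v0 j)^2
        = (∑ j, (Wstar i j)^2) + (Δmem i)^2 := by
      intro i
      rw [rowexp i, hrow i, sumsq_of_l2norm_one hv0]
      ring
    calc frobSq (Wstar + vecMulVec Δmem v0)
        = ∑ i, ((∑ j, (Wstar i j)^2) + (Δmem i)^2) := by
          simp only [frobSq, Matrix.add_apply, vecMulVec_apply]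
          exact Finset.sum_congr rfl fun i _ => rowexp2 i
      _ = frobSq Wstar + d ^ 2 := by
          rw [Finset.sum_add_distrib, hdsq, frobSq]
  -- the numeric inequality
  set c : ℝ := d / (k + 1) with hc
  have hk1 : (0:ℝ) < (k:ℝ) + 1 := by positivity
  have hcK : c * ((k:ℝ) + 1) = d := div_mul_cancel₀ _ (ne_of_gt hk1)
  have hc0 : 0 < c := div_pos hd0 hk1
  have hS : ∑ i, σ i < 1 / 2 := by
    have hkpos : (0:ℝ) < (k:ℝ) := by
      have : (3:ℝ) ≤ (k:ℝ) := by exact_mod_cast hk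
      linarith
    calc ∑ i, σ i < ∑ _i : Fin k, 1 / (2 * (k:ℝ)) := by
          apply Finset.sum_lt_sum_of_nonempty
          · exact Finset.univ_nonempty_iff.mpr (Fin.pos_iff_nonempty.mp (by omega))
          · intro i _; exact hσlt i
      _ = (k:ℝ) * (1 / (2 * (k:ℝ))) := by simp [mul_comm]
      _ = 1 / 2 := by field_simp
  have hSpos : 0 ≤ ∑ i, σ i := Finset.sum_nonneg fun i _ => (hσpos i).le
  have hKge : (3:ℝ) ≤ (k:ℝ) := by exact_mod_cast hk
  -- bound the entangled frobSq
  have hEntBound : ∑ l : Fin (k+1), (σΔ l) ^ 2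
      ≤ (∑ i : Fin k, (σ i + c) ^ 2) + c ^ 2 := by
    rw [Fin.sum_univ_castSucc]
    refine add_le_add (Finset.sum_le_sum fun i _ => ?_) ?_
    · exact pow_le_pow_left₀ (hσΔ1 i).1 (hσΔ1 i).2 2
    · exact pow_le_pow_left₀ hσΔ2.1 hσΔ2.2 2
  have hExpand : (∑ i : Fin k, (σ i + c) ^ 2)
      = (∑ i, (σ i)^2) + 2 * c * (∑ i, σ i) + (k:ℝ) * c ^ 2 := by
    have : ∀ i : Fin k, (σ i + c)^2 = (σ i)^2 + 2 * c * σ i + c^2 := fun i => by ring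
    rw [Finset.sum_congr rfl fun i _ => this i, Finset.sum_add_distrib,
      Finset.sum_add_distrib, ← Finset.mul_sum]
    simp [mul_comm]
  have hNum : (∑ i, (σ i)^2) + 2 * c * (∑ i, σ i) + (k:ℝ) * c ^ 2 + c ^ 2
      < (∑ i, (σ i)^2) + d ^ 2 := by
    have := num_ineq (k:ℝ) d c (∑ i, σ i) hKge hd1 hc hSpos hS
    linarith
  have hlt : frobSq ((∑ i : Fin k, σΔ i.castSucc • vecMulVec (ut i.castSucc) (v i))
        + σΔ (Fin.last k) • vecMulVec (ut (Fin.last k)) vlast)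
      < frobSq (Wstar + vecMulVec Δmem v0) := by
    rw [hEnt, hDis, hWs]
    calc ∑ l : Fin (k+1), (σΔ l) ^ 2 ≤ (∑ i : Fin k, (σ i + c) ^ 2) + c ^ 2 := hEntBound
      _ = (∑ i, (σ i)^2) + 2 * c * (∑ i, σ i) + (k:ℝ) * c ^ 2 + c ^ 2 := by rw [hExpand]
      _ < (∑ i, (σ i)^2) + d ^ 2 := hNum
  simp only [frobNorm]
  exact Real.sqrt_lt_sqrt (frobSq_nonneg _) hlt
end

section
/- Consider d_emb ≥ 2, coordinates {1, …, d_h} partitioned into a shared set S and a memorization set M, and matrices W^{(0)}, …, W^{(N)} ∈ ℝ^{d_emb × d_h} with W^{(0)} = 0 and update W^{(t+1)} = W^{(t)} + γ (e^{(t)} − σ(W^{(t)} z^{(t)})) (z^{(t)})^⊤ for activations z^{(t)} ∈ ℝ^{d_h} and targets e^{(t)} ∈ ℝ^{d_emb}, where γ > 0. Let K ⊆ {0, …, N−1} with |K| = k be the steps at which the memorized pair appears: z^{(t)} = z^mem and e^{(t)} = e^mem for t ∈ K, where e^mem is a unit vector and the restriction of z^mem to the coordinates M has unit Euclidean norm.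 Assume (i) ⟨e^mem, e^{(t)}⟩ = 0 for all t ∉ K; (ii) there is c_max > 0 with ⟨e^mem, σ(W^{(t)} z^{(t)})⟩ ≤ c_max for all t; (iii) there is a set K' ⊆ {0,…,N−1} \ K with |K'| = p(N−k) for some p ∈ [0,1] such that z^{(t)}_M = 0 for every t ∉ K ∪ K' (the memorization-sink neurons are dropped out on those steps); and (iv) there is ε_mem ≥ 0 with 0 ≤ ⟨z^{(t)}_M, z^mem_M⟩ ≤ ε_mem for all t ∈ K', where x_M denotes the restriction of x to the coordinates in M. Then the memorization-neurons-only logit satisfies ⟨e^mem, W^{(N)}_M z^mem_M⟩ ≥ γ k (1 − c_max) − γ p (N − k) ε_mem c_max, where W_M denotes the submatrix of W consisting of the columns indexed by M. -/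
open Matrix

private lemma sum_gamma_mul_const {α : Type*} (s : Finset α) (f : α → ℝ) (γ c : ℝ) :
    ∑ a ∈ s, γ * f a * c = γ * (∑ a ∈ s, f a) * c := by
  rw [← Finset.sum_mul, ← Finset.mul_sum]

/-- MemSinks accumulates memorization in the memorization-sink neurons. The hidden
coordinates are partitioned into a shared set `S` and a memorization set `M`. Training
proceeds by `W^{(t+1)} = W^{(t)} + γ (e^{(t)} - σ(W^{(t)} z^{(t)})) (z^{(t)})ᵀ` from
`W^{(0)} = 0`, with the memorized pair `(z_mem, e_mem)` appearing at the `k` steps in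
`K`. The sink coordinates `M` are active on only the `p(N - k)` non-memorized steps in
`K'` (and are dropped out, `z^{(t)}_M = 0`, on all other non-memorized steps). Under the
stated orthogonality, softmax-mass, and similarity assumptions, the
memorization-neurons-only logit satisfies
`⟨e_mem, W^{(N)}_M z_mem,M⟩ ≥ γ k (1 - c_max) - γ p (N - k) ε_mem c_max`. -/
theorem memsinks_sink_logit_lower_bound {demb dh : ℕ} (hdemb : 2 ≤ demb)
    (S M : Finset (Fin dh)) (hdisj : Disjoint S M) (hunion : S ∪ M = Finset.univ)
    (N k : ℕ) (γ : ℝ) (hγ : 0 < γ)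
    (zmem : Fin dh → ℝ) (emem : Fin demb → ℝ)
    (hememunit : l2norm emem = 1)
    (hzmemM : ∑ i ∈ M, (zmem i) ^ 2 = 1)
    (z : ℕ → Fin dh → ℝ) (e : ℕ → Fin demb → ℝ)
    (W : ℕ → Matrix (Fin demb) (Fin dh) ℝ) (hW0 : W 0 = 0)
    (hupd : ∀ t < N,
      W (t + 1) = W t + γ • vecMulVec (e t - softmax ((W t).mulVec (z t))) (z t))
    (K : Finset ℕ) (hK : K ⊆ Finset.range N) (hKcard : K.card = k)
    (hmem : ∀ t ∈ K, z t = zmem ∧ e t = emem)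
    (horth : ∀ t < N, t ∉ K → dotp emem (e t) = 0)
    (cmax : ℝ) (hcmax : 0 < cmax)
    (hpred : ∀ t < N, dotp emem (softmax ((W t).mulVec (z t))) ≤ cmax)
    (K' : Finset ℕ) (hK' : K' ⊆ Finset.range N) (hK'disj : Disjoint K' K)
    (p : ℝ) (hp0 : 0 ≤ p) (hp1 : p ≤ 1)
    (hK'card : (K'.card : ℝ) = p * ((N : ℝ) - k))
    (hdrop : ∀ t < N, t ∉ K → t ∉ K' → ∀ i ∈ M, z t i = 0)
    (εmem : ℝ) (hεmem : 0 ≤ εmem)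
    (hsim : ∀ t ∈ K',
      0 ≤ ∑ i ∈ M, z t i * zmem i ∧ ∑ i ∈ M, z t i * zmem i ≤ εmem) :
    γ * k * (1 - cmax) - γ * p * ((N : ℝ) - k) * εmem * cmax
      ≤ ∑ a, emem a * ∑ j ∈ M, W N a j * zmem j := by

  set g : ℕ → ℝ := fun t => ∑ a, emem a * ∑ j ∈ M, W t a j * zmem j with hg
  have hstep : ∀ t < N, g (t + 1) - g t =
      γ * (dotp emem (e t) - dotp emem (softmax ((W t).mulVec (z t)))) *
        (∑ j ∈ M, z t j * zmem j) := by
    intro t ht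
    have hW := hupd t ht
    simp only [hg]
    rw [hW]
    simp only [Matrix.add_apply, Matrix.smul_apply, Pi.sub_apply, vecMulVec_apply,
      smul_eq_mul, add_mul, Finset.sum_add_distrib, mul_add, Finset.sum_add_distrib]
    have hterm : ∀ a : Fin demb,
        emem a * ∑ j ∈ M, γ * ((e t a - softmax ((W t).mulVec (z t)) a) * z t j) * zmem j
        = γ * (emem a * e t a - emem a * softmax ((W t).mulVec (z t)) a) *
            (∑ j ∈ M, z t j * zmem j) := by
      intro a
      rw [Finset.mul_sum, Finset.mul_sum]
      apply Finset.sum_congr rfl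
      intro j _
      ring
    rw [Finset.sum_congr rfl (fun a _ => hterm a)]
    rw [dotp, dotp, ← Finset.sum_sub_distrib, ← sum_gamma_mul_const]
    ring
  have hg0 : g 0 = 0 := by
    simp [hg, hW0]
  have hsum : ∑ t ∈ Finset.range N, (g (t + 1) - g t) = g N := by
    rw [Finset.sum_range_sub g N, hg0, sub_zero]
  -- bounds on each increment
  have hdotmem : dotp emem emem = 1 := by
    have h1 : (∑ i, (emem i) ^ 2) = 1 := by
      have := hememunit
      rw [l2norm] at this
      have hnn : 0 ≤ ∑ i, (emem i) ^ 2 :=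
        Finset.sum_nonneg fun i _ => sq_nonneg _
      nlinarith [Real.sq_sqrt hnn, this]
    rw [dotp, ← h1]
    exact Finset.sum_congr rfl fun i _ => (sq (emem i)).symm
  have hKmem : ∀ t ∈ K, γ * (1 - cmax) ≤ g (t + 1) - g t := by
    intro t ht
    have htN : t < N := Finset.mem_range.mp (hK ht)
    obtain ⟨hz, he⟩ := hmem t ht
    rw [hstep t htN, hz, he]
    have hc : (∑ j ∈ M, zmem j * zmem j) = 1 := by
      rw [← hzmemM]; exact Finset.sum_congr rfl fun j _ => (sq (zmem j)).symm
    rw [hc, mul_one, hdotmem]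
    have hs := hpred t htN
    rw [hz] at hs
    nlinarith
  have hK'mem : ∀ t ∈ K', -(γ * εmem * cmax) ≤ g (t + 1) - g t := by
    intro t ht
    have htN : t < N := Finset.mem_range.mp (hK' ht)
    have htnK : t ∉ K := fun h => (Finset.disjoint_left.mp hK'disj ht) h
    rw [hstep t htN, horth t htN htnK]
    obtain ⟨hs0, hs1⟩ := hsim t ht
    have hs := hpred t htN
    have h4 : dotp emem (softmax ((W t).mulVec (z t))) * (∑ i ∈ M, z t i * zmem i)
        ≤ cmax * εmem :=
      le_trans (mul_le_mul_of_nonneg_right hs hs0)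
        (mul_le_mul_of_nonneg_left hs1 hcmax.le)
    nlinarith [mul_le_mul_of_nonneg_left h4 hγ.le]
  have hrest : ∀ t ∈ (Finset.range N \ K) \ K', g (t + 1) - g t = 0 := by
    intro t ht
    simp only [Finset.mem_sdiff, Finset.mem_range] at ht
    obtain ⟨⟨htN, htnK⟩, htnK'⟩ := ht
    rw [hstep t htN]
    have hz0 : (∑ j ∈ M, z t j * zmem j) = 0 := by
      apply Finset.sum_eq_zero
      intro j hj
      rw [hdrop t htN htnK htnK' j hj, zero_mul]
    rw [hz0, mul_zero]
  have hK'sub : K' ⊆ Finset.range N \ K := by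
    intro t ht
    simp only [Finset.mem_sdiff]
    exact ⟨hK' ht, fun h => Finset.disjoint_left.mp hK'disj ht h⟩
  have h1 := Finset.sum_sdiff (f := fun t => g (t + 1) - g t) hK
  have h2 := Finset.sum_sdiff (f := fun t => g (t + 1) - g t) hK'sub
  have h3 : ∑ t ∈ (Finset.range N \ K) \ K', (g (t + 1) - g t) = 0 :=
    Finset.sum_eq_zero hrest
  have hb1 : (k : ℝ) * (γ * (1 - cmax)) ≤ ∑ t ∈ K, (g (t + 1) - g t) := by
    have := Finset.card_nsmul_le_sum K (fun t => g (t + 1) - g t) (γ * (1 - cmax)) hKmem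
    rwa [hKcard, nsmul_eq_mul] at this
  have hb2 : (p * ((N : ℝ) - k)) * (-(γ * εmem * cmax)) ≤ ∑ t ∈ K', (g (t + 1) - g t) := by
    have := Finset.card_nsmul_le_sum K' (fun t => g (t + 1) - g t) (-(γ * εmem * cmax)) hK'mem
    rwa [nsmul_eq_mul, hK'card] at this
  have hgN : γ * k * (1 - cmax) - γ * p * ((N : ℝ) - k) * εmem * cmax ≤ g N := by
    calc γ * k * (1 - cmax) - γ * p * ((N : ℝ) - k) * εmem * cmax
        = (k : ℝ) * (γ * (1 - cmax)) + (p * ((N : ℝ) - k)) * (-(γ * εmem * cmax)) := by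
          ring
      _ ≤ (∑ t ∈ K, (g (t + 1) - g t)) + ∑ t ∈ K', (g (t + 1) - g t) :=
          add_le_add hb1 hb2
      _ ≤ (∑ t ∈ K, (g (t + 1) - g t)) +
          ((∑ t ∈ (Finset.range N \ K) \ K', (g (t + 1) - g t)) +
            ∑ t ∈ K', (g (t + 1) - g t)) := by
          rw [h3]; simp
      _ = ∑ t ∈ Finset.range N, (g (t + 1) - g t) := by rw [h2, add_comm, h1]
      _ = g N := hsum
  exact hgN
end
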